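/- Let A be a C*-algebra (over ℂ) and a, b ∈ A. Then the norm of the 2×2 matrix !![a, −b; b, a] over A equals max(‖a + Complex.I • b‖, ‖a − Complex.I • b‖). -/

import Mathlib

/-- The canonical C*-matrix norm on matrices over a C*-algebra `A`, obtained by viewing an
`m × n` matrix as an operator between the Hilbert C*-modules `A^n` and `A^m` (as in
Mathlib's `CStarMatrix`).  For square matrices this is the unique C*-algebra norm. -/
noncomputable def cstarMatrixNorm {A : Type*} [NonUnitalNormedRing A] [StarRing A]
    {m n : ℕ} (M : Matrix (Fin m) (Fin n) A) : ℝ :=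
  sSup {r : ℝ | ∃ v : Fin n → A, ‖∑ i, star (v i) * v i‖ ≤ 1 ∧
    r = Real.sqrt ‖∑ j, star (M.mulVec v j) * M.mulVec v j‖}

section Aux

variable {A : Type*} [NonUnitalCStarAlgebra A]

private lemma key_id (x y : A) :
    star (x + Complex.I • y) * (x + Complex.I • y)
      + star (x - Complex.I • y) * (x - Complex.I • y)
    = (2:ℂ) • (star x * x + star y * y) := by
  simp only [star_add, star_sub, star_smul, RCLike.star_def, Complex.conj_I, add_mul, sub_mul,
    mul_add, mul_sub, smul_mul_assoc, mul_smul_comm, smul_smul, neg_smul, smul_neg, neg_mul,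
    mul_neg, Complex.I_mul_I, neg_neg, one_smul]
  match_scalars <;> simp [Complex.I_mul_I] <;> norm_num

private lemma mul_split (a b v0 v1 : A) :
    (a + Complex.I • b) * (v0 + Complex.I • v1)
      = (a * v0 + -b * v1) + Complex.I • (b * v0 + a * v1) ∧
    (a - Complex.I • b) * (v0 - Complex.I • v1)
      = (a * v0 + -b * v1) - Complex.I • (b * v0 + a * v1) := by
  constructor <;>
  · simp only [add_mul, sub_mul, mul_add, mul_sub, smul_mul_assoc, mul_smul_comm, smul_smul,
      Complex.I_mul_I, neg_smul, smul_neg, neg_mul, mul_neg, one_smul, neg_neg]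
    match_scalars <;> simp [Complex.I_mul_I] <;> norm_num

private noncomputable def diagSet (c d : A) : Set ℝ :=
  {r : ℝ | ∃ t0 t1 : A, ‖star t0 * t0 + star t1 * t1‖ ≤ 1 ∧
    r = Real.sqrt ‖star (c * t0) * (c * t0) + star (d * t1) * (d * t1)‖}

private lemma diagSet_ub (c d : A) : ∀ r ∈ diagSet c d, r ≤ max ‖c‖ ‖d‖ := by
  rintro r ⟨t0, t1, hc, rfl⟩
  set K : ℝ := max ‖c‖ ‖d‖ with hK
  have hK0 : 0 ≤ K := le_max_iff.2 (Or.inl (norm_nonneg c))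
  let B := Unitization ℂ A
  have key : ∀ (e t : A), ‖e‖ ≤ K →
      star ((e : B) * (t : B)) * ((e : B) * (t : B))
        ≤ (K^2 : ℝ) • (star (t : B) * (t : B)) := by
    intro e t he
    calc star ((e:B) * (t:B)) * ((e:B) * (t:B))
        = star (t:B) * (star (e:B) * (e:B)) * (t:B) := by
          simp only [star_mul]; noncomm_ring
      _ ≤ ‖star (e:B) * (e:B)‖ • (star (t:B) * (t:B)) :=
          CStarAlgebra.star_left_conjugate_le_norm_smul
      _ ≤ (K^2 : ℝ) • (star (t:B) * (t:B)) := by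
          rw [← sub_nonneg, ← sub_smul]
          refine smul_nonneg ?_ (star_mul_self_nonneg _)
          rw [sub_nonneg, CStarRing.norm_star_mul_self, Unitization.norm_inr, pow_two]
          exact mul_le_mul he he (norm_nonneg e) hK0
  have h1 : star ((c:B) * (t0:B)) * ((c:B) * (t0:B)) + star ((d:B) * (t1:B)) * ((d:B) * (t1:B))
      ≤ (K^2 : ℝ) • (star (t0:B) * (t0:B) + star (t1:B) * (t1:B)) := by
    rw [smul_add]
    exact add_le_add (key c t0 (le_max_left _ _)) (key d t1 (le_max_right _ _))
  have h2 : ‖star (c * t0) * (c * t0) + star (d * t1) * (d * t1)‖ ≤ K^2 := by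
    have hXB : ‖star (c * t0) * (c * t0) + star (d * t1) * (d * t1)‖
        = ‖star ((c:B) * (t0:B)) * ((c:B) * (t0:B))
            + star ((d:B) * (t1:B)) * ((d:B) * (t1:B))‖ := by
      rw [← Unitization.norm_inr (𝕜 := ℂ)]
      congr 1
      simp [Unitization.inr_add, Unitization.inr_mul, Unitization.inr_star]
    have hconsB : ‖star (t0:B) * (t0:B) + star (t1:B) * (t1:B)‖ ≤ 1 := by
      rw [show star (t0:B) * (t0:B) + star (t1:B) * (t1:B)
            = ((star t0 * t0 + star t1 * t1 : A) : B) by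
          simp [Unitization.inr_add, Unitization.inr_mul, Unitization.inr_star],
        Unitization.norm_inr]
      exact hc
    rw [hXB]
    calc ‖star ((c:B) * (t0:B)) * ((c:B) * (t0:B)) + star ((d:B) * (t1:B)) * ((d:B) * (t1:B))‖
        ≤ ‖(K^2 : ℝ) • (star (t0:B) * (t0:B) + star (t1:B) * (t1:B))‖ :=
          CStarAlgebra.norm_le_norm_of_nonneg_of_le
            (add_nonneg (star_mul_self_nonneg _) (star_mul_self_nonneg _)) h1
      _ = K^2 * ‖star (t0:B) * (t0:B) + star (t1:B) * (t1:B)‖ := by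
          rw [norm_smul, Real.norm_of_nonneg (by positivity)]
      _ ≤ K^2 := by nlinarith [hconsB, sq_nonneg K]
  calc Real.sqrt ‖star (c * t0) * (c * t0) + star (d * t1) * (d * t1)‖
      ≤ Real.sqrt (K^2) := Real.sqrt_le_sqrt h2
    _ = K := Real.sqrt_sq hK0

private lemma diagSet_mem_left (c d : A) : ‖c‖ ∈ diagSet c d := by
  by_cases hc : c = 0
  · exact ⟨0, 0, by simp, by simp [hc]⟩
  · have hc0 : (0:ℝ) < ‖c‖ := norm_pos_iff.mpr hc
    refine ⟨(‖c‖⁻¹ : ℝ) • star c, 0, ?_, ?_⟩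
    · simp only [mul_zero, star_zero, zero_mul, add_zero]
      rw [CStarRing.norm_star_mul_self, norm_smul, norm_star, Real.norm_of_nonneg (by positivity),
        inv_mul_cancel₀ hc0.ne']
      norm_num
    · simp only [mul_zero, star_zero, zero_mul, add_zero]
      rw [CStarRing.norm_star_mul_self, mul_smul_comm, norm_smul,
        Real.norm_of_nonneg (by positivity), CStarRing.norm_self_mul_star]
      rw [show ‖c‖⁻¹ * (‖c‖ * ‖c‖) = ‖c‖ by field_simp]
      rw [Real.sqrt_mul_self hc0.le]

private lemma diagSet_mem_right (c d : A) : ‖d‖ ∈ diagSet c d := by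
  by_cases hd : d = 0
  · exact ⟨0, 0, by simp, by simp [hd]⟩
  · have hd0 : (0:ℝ) < ‖d‖ := norm_pos_iff.mpr hd
    refine ⟨0, (‖d‖⁻¹ : ℝ) • star d, ?_, ?_⟩
    · simp only [mul_zero, star_zero, zero_mul, zero_add]
      rw [CStarRing.norm_star_mul_self, norm_smul, norm_star, Real.norm_of_nonneg (by positivity),
        inv_mul_cancel₀ hd0.ne']
      norm_num
    · simp only [mul_zero, star_zero, zero_mul, zero_add]
      rw [CStarRing.norm_star_mul_self, mul_smul_comm, norm_smul,
        Real.norm_of_nonneg (by positivity), CStarRing.norm_self_mul_star]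
      rw [show ‖d‖⁻¹ * (‖d‖ * ‖d‖) = ‖d‖ by field_simp]
      rw [Real.sqrt_mul_self hd0.le]

private lemma sSup_diagSet (c d : A) : sSup (diagSet c d) = max ‖c‖ ‖d‖ := by
  have hbdd : BddAbove (diagSet c d) := ⟨max ‖c‖ ‖d‖, fun r hr => diagSet_ub c d r hr⟩
  refine le_antisymm (csSup_le ⟨‖c‖, diagSet_mem_left c d⟩ (diagSet_ub c d)) ?_
  exact max_le (le_csSup hbdd (diagSet_mem_left c d)) (le_csSup hbdd (diagSet_mem_right c d))

end Aux

/-- Lemma 2.2: for a C*-algebra `A` over ℂ and `a, b ∈ A`,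
`‖!![a, -b; b, a]‖ = max ‖a + i b‖ ‖a - i b‖`. -/
theorem norm_two_by_two_skew {A : Type*} [NonUnitalCStarAlgebra A] (a b : A) :
    cstarMatrixNorm !![a, -b; b, a]
      = max ‖a + Complex.I • b‖ ‖a - Complex.I • b‖ := by
  set c : A := a + Complex.I • b with hc
  set d : A := a - Complex.I • b with hd
  rw [cstarMatrixNorm, ← sSup_diagSet c d]
  congr 1
  -- scalar facts
  set κ : ℂ := (↑(Real.sqrt 2))⁻¹ with hκdef
  have hκstar : star κ = κ := by
    simp [hκdef, Complex.star_def, ← Complex.ofReal_inv, Complex.conj_ofReal]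
  have hκκ : κ * κ * 2 = 1 := by
    rw [hκdef, ← mul_inv, ← Complex.ofReal_mul, Real.mul_self_sqrt (by norm_num)]
    norm_num
  have hsmm : ∀ (γ : ℂ) (x y : A), star (γ • x) * (γ • y) = (star γ * γ) • (star x * y) := by
    intro γ x y
    rw [star_smul, smul_mul_smul_comm]
  ext r
  simp only [Set.mem_setOf_eq, diagSet, Fin.sum_univ_two, Matrix.mulVec, dotProduct,
    Matrix.of_apply, Matrix.cons_val', Matrix.cons_val_zero, Matrix.cons_val_one,
    Matrix.head_cons, Matrix.empty_val', Matrix.cons_val_fin_one, Matrix.head_fin_const]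
  constructor
  · rintro ⟨v, hcons, rfl⟩
    refine ⟨κ • (v 0 + Complex.I • v 1), κ • (v 0 - Complex.I • v 1), ?_, ?_⟩
    · rw [hsmm, hsmm, hκstar, ← smul_add, key_id, smul_smul, hκκ, one_smul]
      exact hcons
    · rw [show (c * (κ • (v 0 + Complex.I • v 1))) = κ • (c * (v 0 + Complex.I • v 1)) from
          (mul_smul_comm κ c _),
        show (d * (κ • (v 0 - Complex.I • v 1))) = κ • (d * (v 0 - Complex.I • v 1)) from
          (mul_smul_comm κ d _),
        hsmm, hsmm, hκstar, ← smul_add, hc, hd, (mul_split a b (v 0) (v 1)).1,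
        (mul_split a b (v 0) (v 1)).2, key_id, smul_smul, hκκ, one_smul]
  · rintro ⟨t0, t1, hcons, rfl⟩
    have h2ne : (2:ℂ) ≠ 0 := by norm_num
    have hcan : ∀ x y : A, (2:ℂ) • x = (2:ℂ) • y → x = y := by
      intro x y h
      have h' := congrArg (fun z : A => (2:ℂ)⁻¹ • z) h
      simpa [smul_smul, inv_mul_cancel₀ h2ne] using h'
    have hκ2 : star (κ * 2) * (κ * 2) = 2 := by
      rw [star_mul']
      rw [show star (2:ℂ) = 2 by simp, hκstar]
      linear_combination 2 * hκκ
    refine ⟨![κ • (t0 + t1), κ • ((-Complex.I) • (t0 - t1))], ?_, ?_⟩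
    · simp only [Matrix.cons_val_zero, Matrix.cons_val_one, Matrix.head_cons]
      set v0 : A := κ • (t0 + t1) with hv0
      set v1 : A := κ • ((-Complex.I) • (t0 - t1)) with hv1
      have hs0 : v0 + Complex.I • v1 = (κ * 2) • t0 := by
        rw [hv0, hv1]
        match_scalars <;> (try ring_nf) <;> (try simp only [Complex.I_sq]) <;> (try push_cast) <;> (try ring1)
      have hs1 : v0 - Complex.I • v1 = (κ * 2) • t1 := by
        rw [hv0, hv1]
        match_scalars <;> (try ring_nf) <;> (try simp only [Complex.I_sq]) <;> (try push_cast) <;> (try ring1)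
      have hA : star v0 * v0 + star v1 * v1 = star t0 * t0 + star t1 * t1 := by
        refine hcan _ _ ?_
        rw [← key_id v0 v1, hs0, hs1, hsmm, hsmm, hκ2, ← smul_add]
      rw [hA]; exact hcons
    · simp only [Matrix.cons_val_zero, Matrix.cons_val_one, Matrix.head_cons]
      set v0 : A := κ • (t0 + t1) with hv0
      set v1 : A := κ • ((-Complex.I) • (t0 - t1)) with hv1
      have hs0 : v0 + Complex.I • v1 = (κ * 2) • t0 := by
        rw [hv0, hv1]
        match_scalars <;> (try ring_nf) <;> (try simp only [Complex.I_sq]) <;> (try push_cast) <;> (try ring1)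
      have hs1 : v0 - Complex.I • v1 = (κ * 2) • t1 := by
        rw [hv0, hv1]
        match_scalars <;> (try ring_nf) <;> (try simp only [Complex.I_sq]) <;> (try push_cast) <;> (try ring1)
      have hV : star (a * v0 + -b * v1) * (a * v0 + -b * v1)
          + star (b * v0 + a * v1) * (b * v0 + a * v1)
          = star (c * t0) * (c * t0) + star (d * t1) * (d * t1) := by
        refine hcan _ _ ?_
        rw [← key_id (a * v0 + -b * v1) (b * v0 + a * v1),
          ← (mul_split a b v0 v1).1, ← (mul_split a b v0 v1).2, ← hc, ← hd, hs0, hs1,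
          show (c * ((κ * 2) • t0)) = (κ * 2) • (c * t0) from (mul_smul_comm _ c _),
          show (d * ((κ * 2) • t1)) = (κ * 2) • (d * t1) from (mul_smul_comm _ d _),
          hsmm, hsmm, hκ2, ← smul_add]
      rw [hV]
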